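/- Consider one clique consisting of n clusters each of size 2, say cluster G_i = {t_i', t_i''} for i = 1..n, with any two facts in different clusters conflicting. The canonical disjunctive database representing the repairs consists of the 2^n disjunctions { t_1 ∨ ... ∨ t_n : t_i ∈ G_i }, and its size (total number of fact occurrences) is n·2^n. -/

import Mathlib

variable {F : Type*} [DecidableEq F]

/-- M is a model of the disjunctive database D: it meets every disjunction. -/
def IsModel (D : Finset (Finset F)) (M : Finset F) : Prop :=
  ∀ d ∈ D, ∃ t ∈ d, t ∈ M

/-- M is a minimal model of D. -/
def IsMinModel (D : Finset (Finset F)) (M : Finset F) : Prop :=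
  IsModel D M ∧ ∀ M' ⊂ M, ¬ IsModel D M'

/-- reduction removes every disjunction properly containing another disjunction of D. -/
def reduction (D : Finset (Finset F)) : Finset (Finset F) :=
  D.filter (fun d => ∀ d' ∈ D, ¬ d' ⊂ d)

/-- S is conflict-free w.r.t. a binary conflict relation G. -/
def ConflictFree (G : F → F → Prop) (S : Finset F) : Prop :=
  ∀ a ∈ S, ∀ b ∈ S, ¬ G a b

/-- S is a repair of V w.r.t. conflict relation G: a maximal conflict-free subset of V. -/
def IsRepairC (V : Finset F) (G : F → F → Prop) (S : Finset F) : Prop :=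
  S ⊆ V ∧ ConflictFree G S ∧ ∀ S', S ⊂ S' → S' ⊆ V → ¬ ConflictFree G S'

/-- The database of all disjunctions choosing one fact per cluster. -/
def DB (n : ℕ) : Finset (Finset (Fin n × Bool)) :=
  Finset.univ.image (fun g : Fin n → Bool => Finset.univ.image (fun i : Fin n => (i, g i)))

/-- The cluster of index i. -/
def Cl {n : ℕ} (i : Fin n) : Finset (Fin n × Bool) := {(i, false), (i, true)}

lemma mem_Cl {n : ℕ} {i : Fin n} {t : Fin n × Bool} : t ∈ Cl i ↔ t.1 = i := by
  obtain ⟨j, b⟩ := t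
  cases b <;> simp [Cl, Prod.ext_iff]

lemma mem_img {n : ℕ} (b : Fin n → Bool) (t : Fin n × Bool) :
    t ∈ Finset.univ.image (fun i => (i, b i)) ↔ t.2 = b t.1 := by
  constructor
  · intro h
    simp only [Finset.mem_image, Finset.mem_univ, true_and] at h
    obtain ⟨i, hi⟩ := h
    rw [← hi]
  · intro h
    refine Finset.mem_image.2 ⟨t.1, Finset.mem_univ _, ?_⟩
    exact Prod.ext rfl h.symm

lemma mem_DB {n : ℕ} {d : Finset (Fin n × Bool)} :
    d ∈ DB n ↔ ∃ g : Fin n → Bool, d = Finset.univ.image (fun i : Fin n => (i, g i)) := by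
  simp [DB, eq_comm]

lemma model_DB {n : ℕ} {M : Finset (Fin n × Bool)} :
    IsModel (DB n) M ↔ ∃ i, (i, false) ∈ M ∧ (i, true) ∈ M := by
  constructor
  · intro h
    by_contra hc
    push_neg at hc
    set g : Fin n → Bool := fun i => if (i, false) ∈ M then true else false with hg
    obtain ⟨t, ht, htM⟩ := h _ (mem_DB.2 ⟨g, rfl⟩)
    have h2 := (mem_img g t).1 ht
    by_cases hf : (t.1, false) ∈ M
    · have hgt : g t.1 = true := if_pos hf
      have : t = (t.1, true) := Prod.ext rfl (by rw [h2, hgt])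
      exact hc t.1 hf (this ▸ htM)
    · have hgt : g t.1 = false := if_neg hf
      have : t = (t.1, false) := Prod.ext rfl (by rw [h2, hgt])
      exact hf (this ▸ htM)
  · rintro ⟨i, h0, h1⟩ d hd
    obtain ⟨g, rfl⟩ := mem_DB.1 hd
    refine ⟨(i, g i), (mem_img g _).2 rfl, ?_⟩
    cases hgi : g i
    · exact h0
    · exact h1

lemma Cl_subset_of_both {n : ℕ} {i : Fin n} {M : Finset (Fin n × Bool)}
    (h0 : (i, false) ∈ M) (h1 : (i, true) ∈ M) : Cl i ⊆ M := by
  intro t ht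
  simp only [Cl, Finset.mem_insert, Finset.mem_singleton] at ht
  rcases ht with rfl | rfl
  · exact h0
  · exact h1

lemma minmodel_DB {n : ℕ} {M : Finset (Fin n × Bool)} :
    IsMinModel (DB n) M ↔ ∃ i, M = Cl i := by
  constructor
  · rintro ⟨hm, hmin⟩
    obtain ⟨i, h0, h1⟩ := model_DB.1 hm
    have hsub : Cl i ⊆ M := Cl_subset_of_both h0 h1
    have hClm : IsModel (DB n) (Cl i) := model_DB.2 ⟨i, by simp [Cl]⟩
    by_cases heq : Cl i = M
    · exact ⟨i, heq.symm⟩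
    · exact absurd hClm (hmin _ (Finset.ssubset_iff_subset_ne.2 ⟨hsub, heq⟩))
  · rintro ⟨i, rfl⟩
    refine ⟨model_DB.2 ⟨i, by simp [Cl]⟩, ?_⟩
    intro M' hss hm'
    obtain ⟨j, h0, h1⟩ := model_DB.1 hm'
    have hj : j = i := by
      have := mem_Cl.1 (hss.subset h0)
      simpa using this
    subst hj
    exact hss.ne (Finset.Subset.antisymm hss.subset (Cl_subset_of_both h0 h1))

lemma cf_Cl {n : ℕ} (i : Fin n) :
    ConflictFree (fun a b : Fin n × Bool => a.1 ≠ b.1) (Cl i) := by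
  intro a ha b hb
  rw [mem_Cl] at ha hb
  simp [ha, hb]

lemma repair_iff {n : ℕ} (hn : 0 < n) {M : Finset (Fin n × Bool)} :
    IsRepairC Finset.univ (fun a b => a.1 ≠ b.1) M ↔ ∃ i, M = Cl i := by
  constructor
  · rintro ⟨-, hcf, hmax⟩
    rcases M.eq_empty_or_nonempty with rfl | ⟨t, ht⟩
    · exfalso
      refine hmax (Cl ⟨0, hn⟩) ?_ (Finset.subset_univ _) (cf_Cl _)
      refine Finset.ssubset_iff_subset_ne.2 ⟨Finset.empty_subset _, ?_⟩
      intro h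
      have : ((⟨0, hn⟩ : Fin n), false) ∈ (∅ : Finset (Fin n × Bool)) := by
        rw [h]; simp [Cl]
      simpa using this
    · have hsub : M ⊆ Cl t.1 := by
        intro a ha
        rw [mem_Cl]
        by_contra hne
        exact hcf a ha t ht hne
      by_cases heq : M = Cl t.1
      · exact ⟨t.1, heq⟩
      · exact absurd (cf_Cl t.1) (hmax _ (Finset.ssubset_iff_subset_ne.2 ⟨hsub, heq⟩) (Finset.subset_univ _))
  · rintro ⟨i, rfl⟩
    refine ⟨Finset.subset_univ _, cf_Cl i, ?_⟩
    intro S' hss _ hcf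
    obtain ⟨t, htS, htC⟩ := Finset.exists_of_ssubset hss
    have hti : t.1 ≠ i := fun h => htC (mem_Cl.2 h)
    have h0 : (i, false) ∈ S' := hss.subset (by simp [Cl])
    exact hcf (i, false) h0 t htS (fun h => hti h.symm)

lemma exists_minModel (D' : Finset (Finset F)) :
    ∀ M : Finset F, IsModel D' M → ∃ M', M' ⊆ M ∧ IsMinModel D' M' := by
  intro M
  induction M using Finset.strongInduction with
  | _ M ih =>
    intro h
    by_cases hc : ∀ M'' ⊂ M, ¬ IsModel D' M''
    · exact ⟨M, subset_rfl, h, hc⟩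
    · push_neg at hc
      obtain ⟨M'', hsub, hm⟩ := hc
      obtain ⟨M', h1, h2⟩ := ih M'' hsub hm
      exact ⟨M', h1.trans hsub.subset, h2⟩

theorem stmt11 (n : ℕ) (hn : 0 < n)
    (D : Finset (Finset (Fin n × Bool)))
    (hD : D = Finset.univ.image
      (fun g : Fin n → Bool => Finset.univ.image (fun i : Fin n => (i, g i)))) :
    (∀ M : Finset (Fin n × Bool),
      IsMinModel D M ↔ IsRepairC Finset.univ (fun a b => a.1 ≠ b.1) M)
    ∧ (∀ D' : Finset (Finset (Fin n × Bool)), (∀ d ∈ D', d.Nonempty) →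
        (∀ M : Finset (Fin n × Bool), IsMinModel D' M ↔ IsMinModel D M) → D ⊆ D')
    ∧ (∑ d ∈ D, d.card) = n * 2 ^ n := by
  have hDB : D = DB n := hD
  clear hD
  subst hDB
  refine ⟨?_, ?_, ?_⟩
  · intro M
    exact minmodel_DB.trans (repair_iff hn).symm
  · intro D' hne hiff d hd
    obtain ⟨g, rfl⟩ := mem_DB.1 hd
    by_contra hnotin
    have hA : ∀ i, IsModel D' (Cl i) := fun i => ((hiff _).mpr (minmodel_DB.mpr ⟨i, rfl⟩)).1
    have hSmodel : IsModel D' (Finset.univ.image (fun i : Fin n => (i, !g i))) := by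
      intro d' hd'
      by_contra hc
      push_neg at hc
      have hsubd : d' ⊆ Finset.univ.image (fun i : Fin n => (i, g i)) := by
        intro t htd
        have h1 : ¬ t.2 = !g t.1 := fun h => hc t htd ((mem_img _ t).2 h)
        rw [mem_img]
        cases hgt : g t.1 <;> cases ht2 : t.2 <;> simp_all
      have hsup : Finset.univ.image (fun i : Fin n => (i, g i)) ⊆ d' := by
        intro t htd
        have ht2 := (mem_img g t).1 htd
        obtain ⟨u, hud, huC⟩ := hA t.1 d' hd'
        have hu1 : u.1 = t.1 := mem_Cl.1 huC
        have hu2 : u.2 = g u.1 := (mem_img g u).1 (hsubd hud)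
        have : u = t := Prod.ext hu1 (by rw [hu2, hu1, ← ht2])
        exact this ▸ hud
      exact hnotin ((Finset.Subset.antisymm hsubd hsup) ▸ hd')
    obtain ⟨M', hM'sub, hM'min⟩ := exists_minModel D' _ hSmodel
    obtain ⟨i, rfl⟩ := minmodel_DB.1 ((hiff _).mp hM'min)
    have h0 : ((i, false) : Fin n × Bool).2 = !g i :=
      (mem_img _ _).1 (hM'sub (by simp [Cl]))
    have h1 : ((i, true) : Fin n × Bool).2 = !g i :=
      (mem_img _ _).1 (hM'sub (by simp [Cl]))
    simp at h0 h1
    rw [h0] at h1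
    exact Bool.noConfusion h1
  · have hinj : ∀ g1 ∈ (Finset.univ : Finset (Fin n → Bool)), ∀ g2 ∈ Finset.univ,
        Finset.univ.image (fun i : Fin n => (i, g1 i)) =
          Finset.univ.image (fun i : Fin n => (i, g2 i)) → g1 = g2 := by
      intro g1 _ g2 _ h
      funext i
      have : ((i, g1 i) : Fin n × Bool) ∈ Finset.univ.image (fun i : Fin n => (i, g2 i)) := by
        rw [← h]; exact (mem_img g1 _).2 rfl
      exact (mem_img g2 _).1 this
    rw [DB, Finset.sum_image hinj]
    have hcard : ∀ g : Fin n → Bool, (Finset.univ.image (fun i : Fin n => (i, g i))).card = n := by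
      intro g
      rw [Finset.card_image_of_injective _ (fun a b h => (Prod.ext_iff.1 h).1)]
      simp
    simp only [hcard, Finset.sum_const, Finset.card_univ, smul_eq_mul]
    simp [mul_comm]
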